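/- arXiv:2205.10155 — 3 statements merged into one kernel-verified Lean document; each statement's English description precedes it below -/
import Mathlib

section
/- Let Δ: ℝ → ℝ be sector-bounded in [α̂, β̂]. Suppose there exist a symmetric positive-definite matrix P ∈ ℝ^{d×d}, a scalar λ ≥ 0, and a scalar γ̂ > 0 such that the block matrix M = [[AᵀPA − P, AᵀPB₁, AᵀPB₂], [B₁ᵀPA, B₁ᵀPB₁, B₁ᵀPB₂], [B₂ᵀPA, B₂ᵀPB₁, B₂ᵀPB₂ − γ̂²I]] + λ·NᵀSN + KᵀK is negative definite, where N = [[C₁, D₁₁, D₁₂], [0, 1, 0]], S = [[−α̂β̂, (α̂+β̂)/2], [(α̂+β̂)/2, −1]], and K = [C₂, D₂₁, D₂₂]. Then for any sequences x: ℕ → ℝ^d, h, p: ℕ → ℝ, r: ℕ → ℝ^k, e: ℕ → ℝ^l with x[0] = 0 satisfying, for all n, x[n+1] = A x[n] + B₁ h[n] + B₂ r[n], p[n] = C₁ x[n] + D₁₁ h[n] + D₁₂ r[n], e[n] = C₂ x[n] + D₂₁ h[n] + D₂₂ r[n], and h[n] = Δ(p[n]), it holds for every N ∈ ℕ that Σ_{n=0}^{N}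 ‖e[n]‖² ≤ γ̂² Σ_{n=0}^{N} ‖r[n]‖². In particular the ℓ₂ gain from r to e is at most γ̂. -/
open Matrix Finset

/-- Horizontal concatenation of three matrices with the same row type. -/
noncomputable def concat3 {m : Type*} {d k : ℕ} (X : Matrix m (Fin d) ℝ) (Y : Matrix m (Fin 1) ℝ)
    (Z : Matrix m (Fin k) ℝ) : Matrix m (Fin d ⊕ (Fin 1 ⊕ Fin k)) ℝ :=
  Matrix.of fun i => Sum.elim (X i) (Sum.elim (Y i) (Z i))

/-- The matrix N = [[C₁, D₁₁, D₁₂], [0, 1, 0]]. -/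
noncomputable def Nmat {d k : ℕ} (C₁ : Matrix (Fin 1) (Fin d) ℝ) (D₁₁ : ℝ)
    (D₁₂ : Matrix (Fin 1) (Fin k) ℝ) : Matrix (Fin 2) (Fin d ⊕ (Fin 1 ⊕ Fin k)) ℝ :=
  concat3 (Matrix.of ![C₁ 0, 0]) (Matrix.of ![fun _ => D₁₁, fun _ => 1])
    (Matrix.of ![D₁₂ 0, 0])

/-- The sector matrix S = [[−α̂β̂, (α̂+β̂)/2], [(α̂+β̂)/2, −1]]. -/
noncomputable def Smat (αhat βhat : ℝ) : Matrix (Fin 2) (Fin 2) ℝ :=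
  !![-(αhat * βhat), (αhat + βhat) / 2; (αhat + βhat) / 2, -1]

/-- The block-diagonal matrix diag(P, 0, γ̂²·I). -/
noncomputable def diag3 {d k : ℕ} (P : Matrix (Fin d) (Fin d) ℝ) (γhat : ℝ) :
    Matrix (Fin d ⊕ (Fin 1 ⊕ Fin k)) (Fin d ⊕ (Fin 1 ⊕ Fin k)) ℝ :=
  Matrix.fromBlocks P 0 0 (Matrix.fromBlocks 0 0 0 (γhat ^ 2 • (1 : Matrix (Fin k) (Fin k) ℝ)))

/-- The LMI matrix
M = [[AᵀPA − P, AᵀPB₁, AᵀPB₂], [B₁ᵀPA, B₁ᵀPB₁, B₁ᵀPB₂], [B₂ᵀPA, B₂ᵀPB₁, B₂ᵀPB₂ − γ̂²I]]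
    + λ·NᵀSN + KᵀK
expressed as [A B₁ B₂]ᵀ P [A B₁ B₂] − diag(P, 0, γ̂²I) + λ·NᵀSN + KᵀK. -/
noncomputable def lmiMat {d k l : ℕ}
    (A : Matrix (Fin d) (Fin d) ℝ) (B₁ : Matrix (Fin d) (Fin 1) ℝ)
    (B₂ : Matrix (Fin d) (Fin k) ℝ)
    (C₁ : Matrix (Fin 1) (Fin d) ℝ) (D₁₁ : ℝ) (D₁₂ : Matrix (Fin 1) (Fin k) ℝ)
    (C₂ : Matrix (Fin l) (Fin d) ℝ) (D₂₁ : Matrix (Fin l) (Fin 1) ℝ)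
    (D₂₂ : Matrix (Fin l) (Fin k) ℝ)
    (P : Matrix (Fin d) (Fin d) ℝ) (lam γhat αhat βhat : ℝ) :
    Matrix (Fin d ⊕ (Fin 1 ⊕ Fin k)) (Fin d ⊕ (Fin 1 ⊕ Fin k)) ℝ :=
  (concat3 A B₁ B₂)ᵀ * P * concat3 A B₁ B₂ - diag3 P γhat
    + lam • ((Nmat C₁ D₁₁ D₁₂)ᵀ * Smat αhat βhat * Nmat C₁ D₁₁ D₁₂)
    + (concat3 C₂ D₂₁ D₂₂)ᵀ * concat3 C₂ D₂₁ D₂₂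


lemma concat3_mulVec {m : Type*} {d k : ℕ} (X : Matrix m (Fin d) ℝ) (Y : Matrix m (Fin 1) ℝ)
    (Z : Matrix m (Fin k) ℝ) (u : Fin d → ℝ) (v : Fin 1 → ℝ) (w : Fin k → ℝ) :
    concat3 X Y Z *ᵥ Sum.elim u (Sum.elim v w) = X *ᵥ u + (Y *ᵥ v + Z *ᵥ w) := by
  funext i
  show Sum.elim (X i) (Sum.elim (Y i) (Z i)) ⬝ᵥ Sum.elim u (Sum.elim v w) = _
  rw [sumElim_dotProduct_sumElim, sumElim_dotProduct_sumElim]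
  rfl

lemma dot_transpose_mulVec' {m n : Type*} [Fintype m] [Fintype n]
    (M : Matrix m n ℝ) (v : n → ℝ) (w : m → ℝ) :
    v ⬝ᵥ (Mᵀ *ᵥ w) = (M *ᵥ v) ⬝ᵥ w := by
  rw [dotProduct_mulVec, vecMul_transpose]

lemma Nmat_mulVec {d k : ℕ} (C₁ : Matrix (Fin 1) (Fin d) ℝ) (D₁₁ : ℝ)
    (D₁₂ : Matrix (Fin 1) (Fin k) ℝ)
    (u : Fin d → ℝ) (hv : ℝ) (w : Fin k → ℝ) :
    Nmat C₁ D₁₁ D₁₂ *ᵥ Sum.elim u (Sum.elim (fun _ => hv) w) =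
      ![C₁ 0 ⬝ᵥ u + D₁₁ * hv + D₁₂ 0 ⬝ᵥ w, hv] := by
  rw [Nmat, concat3_mulVec]
  funext i
  fin_cases i <;>
    simp [Matrix.mulVec, dotProduct, Fin.sum_univ_one] <;> ring

lemma diag3_quad {d k : ℕ} (P : Matrix (Fin d) (Fin d) ℝ) (γhat : ℝ)
    (u : Fin d → ℝ) (v : Fin 1 → ℝ) (w : Fin k → ℝ) :
    Sum.elim u (Sum.elim v w) ⬝ᵥ (diag3 P γhat *ᵥ Sum.elim u (Sum.elim v w)) =
      u ⬝ᵥ P *ᵥ u + γhat ^ 2 * (w ⬝ᵥ w) := by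
  rw [diag3, fromBlocks_mulVec, fromBlocks_mulVec]
  simp [Sum.elim_comp_inl, Sum.elim_comp_inr, sumElim_dotProduct_sumElim, smul_mulVec]

lemma smat_quad_nonneg (αhat βhat pv hv : ℝ)
    (hs : (hv - αhat * pv) * (βhat * pv - hv) ≥ 0) :
    0 ≤ ![pv, hv] ⬝ᵥ (Smat αhat βhat *ᵥ ![pv, hv]) := by
  simp [Smat, Matrix.mulVec, dotProduct, Fin.sum_univ_two]
  nlinarith [hs]

/-- If Δ is [α̂, β̂] sector-bounded and the LMI has a solution (P ≻ 0, λ ≥ 0, γ̂ > 0),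
then along every trajectory of F_u(L, Δ) starting at x[0] = 0,
Σ_{n=0}^{N} ‖e[n]‖² ≤ γ̂² Σ_{n=0}^{N} ‖r[n]‖² for every N; i.e. the ℓ₂ gain from r to e
is at most γ̂. -/
theorem lure_l2_gain {d k l : ℕ}
    (A : Matrix (Fin d) (Fin d) ℝ) (B₁ : Matrix (Fin d) (Fin 1) ℝ)
    (B₂ : Matrix (Fin d) (Fin k) ℝ)
    (C₁ : Matrix (Fin 1) (Fin d) ℝ) (D₁₁ : ℝ) (D₁₂ : Matrix (Fin 1) (Fin k) ℝ)
    (C₂ : Matrix (Fin l) (Fin d) ℝ) (D₂₁ : Matrix (Fin l) (Fin 1) ℝ)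
    (D₂₂ : Matrix (Fin l) (Fin k) ℝ)
    (αhat βhat : ℝ) (Δ : ℝ → ℝ)
    (hΔ : ∀ q : ℝ, (Δ q - αhat * q) * (βhat * q - Δ q) ≥ 0)
    (P : Matrix (Fin d) (Fin d) ℝ) (lam γhat : ℝ)
    (hP : P.PosDef) (hlam : 0 ≤ lam) (hγ : 0 < γhat)
    (hM : (-(lmiMat A B₁ B₂ C₁ D₁₁ D₁₂ C₂ D₂₁ D₂₂ P lam γhat αhat βhat)).PosDef)
    (x : ℕ → Fin d → ℝ) (h p : ℕ → ℝ) (r : ℕ → Fin k → ℝ) (e : ℕ → Fin l → ℝ)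
    (hx0 : x 0 = 0)
    (hx : ∀ n, x (n + 1) = A.mulVec (x n) + B₁.mulVec (fun _ => h n) + B₂.mulVec (r n))
    (hp : ∀ n, p n = C₁ 0 ⬝ᵥ x n + D₁₁ * h n + D₁₂ 0 ⬝ᵥ r n)
    (he : ∀ n, e n = C₂.mulVec (x n) + D₂₁.mulVec (fun _ => h n) + D₂₂.mulVec (r n))
    (hh : ∀ n, h n = Δ (p n)) :
    ∀ N : ℕ, ∑ n ∈ Finset.range (N + 1), e n ⬝ᵥ e n ≤
      γhat ^ 2 * ∑ n ∈ Finset.range (N + 1), r n ⬝ᵥ r n := by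
  -- dissipation step
  have key : ∀ n, e n ⬝ᵥ e n + x (n + 1) ⬝ᵥ P *ᵥ x (n + 1) - x n ⬝ᵥ P *ᵥ x n
      - γhat ^ 2 * (r n ⬝ᵥ r n) ≤ 0 := by
    intro n
    set z : (Fin d ⊕ (Fin 1 ⊕ Fin k)) → ℝ :=
      Sum.elim (x n) (Sum.elim (fun _ => h n) (r n)) with hzdef
    have hq : z ⬝ᵥ (lmiMat A B₁ B₂ C₁ D₁₁ D₁₂ C₂ D₂₁ D₂₂ P lam γhat αhat βhat) *ᵥ z ≤ 0 := by
      have h0 := hM.posSemidef.dotProduct_mulVec_nonneg z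
      simp only [Matrix.neg_mulVec, dotProduct_neg, star_trivial] at h0
      linarith
    have hGz : concat3 A B₁ B₂ *ᵥ z = x (n + 1) := by
      rw [hzdef, concat3_mulVec, hx n, add_assoc]
    have hKz : concat3 C₂ D₂₁ D₂₂ *ᵥ z = e n := by
      rw [hzdef, concat3_mulVec, he n, add_assoc]
    have hNz : Nmat C₁ D₁₁ D₁₂ *ᵥ z = ![p n, h n] := by
      rw [hzdef, Nmat_mulVec, ← hp n]
    have hσ : 0 ≤ (Nmat C₁ D₁₁ D₁₂ *ᵥ z) ⬝ᵥ (Smat αhat βhat *ᵥ (Nmat C₁ D₁₁ D₁₂ *ᵥ z)) := by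
      rw [hNz]
      refine smat_quad_nonneg _ _ _ _ ?_
      rw [hh n]; exact hΔ _
    have hD : z ⬝ᵥ (diag3 P γhat *ᵥ z) = x n ⬝ᵥ P *ᵥ x n + γhat ^ 2 * (r n ⬝ᵥ r n) := by
      rw [hzdef, diag3_quad]
    have hexp : z ⬝ᵥ (lmiMat A B₁ B₂ C₁ D₁₁ D₁₂ C₂ D₂₁ D₂₂ P lam γhat αhat βhat) *ᵥ z =
        x (n + 1) ⬝ᵥ P *ᵥ x (n + 1) - (x n ⬝ᵥ P *ᵥ x n + γhat ^ 2 * (r n ⬝ᵥ r n))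
        + lam * ((Nmat C₁ D₁₁ D₁₂ *ᵥ z) ⬝ᵥ (Smat αhat βhat *ᵥ (Nmat C₁ D₁₁ D₁₂ *ᵥ z)))
        + e n ⬝ᵥ e n := by
      rw [lmiMat, Matrix.add_mulVec, Matrix.add_mulVec, Matrix.sub_mulVec,
        dotProduct_add, dotProduct_add, dotProduct_sub, Matrix.smul_mulVec,
        dotProduct_smul]
      simp only [← Matrix.mulVec_mulVec]
      simp only [dot_transpose_mulVec']
      rw [hGz, hKz, hD]
      simp only [smul_eq_mul]
    have hlσ : 0 ≤ lam * ((Nmat C₁ D₁₁ D₁₂ *ᵥ z) ⬝ᵥ (Smat αhat βhat *ᵥ (Nmat C₁ D₁₁ D₁₂ *ᵥ z))) :=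
      mul_nonneg hlam hσ
    rw [hexp] at hq
    linarith
  have main : ∀ N : ℕ, ∑ n ∈ Finset.range (N + 1), e n ⬝ᵥ e n
      + x (N + 1) ⬝ᵥ P *ᵥ x (N + 1) ≤ γhat ^ 2 * ∑ n ∈ Finset.range (N + 1), r n ⬝ᵥ r n := by
    intro N
    induction N with
    | zero =>
      have hk := key 0
      have hx00 : x 0 ⬝ᵥ P *ᵥ x 0 = 0 := by rw [hx0]; simp
      simp only [zero_add, Finset.sum_range_one]
      linarith
    | succ N ih =>
      have hk := key (N + 1)
      rw [Finset.sum_range_succ, Finset.sum_range_succ (fun n => r n ⬝ᵥ r n), mul_add]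
      linarith
  intro N
  have hV : 0 ≤ x (N + 1) ⬝ᵥ P *ᵥ x (N + 1) := by
    have := hP.posSemidef.dotProduct_mulVec_nonneg (x (N + 1))
    simpa using this
  have := main N
  linarith
end

section
/- Let α_max, c_max be reals with 0 < α_max < 1 and c_max ≥ 0, and let α, c: ℕ → ℝ satisfy 0 < α[n] ≤ α_max and 0 ≤ c[n] ≤ c_max for all n. Let q, i: ℕ → ℝ satisfy the recursion q[n+1] = α[n] q[n] + c[n] i[n] for all n. Then for every N ∈ ℕ, Σ_{n=0}^{N} q[n]² ≤ (c_max/(1 − α_max))² Σ_{n=0}^{N} i[n]² + q[0]²/(1 − α_max). In particular, if q[0] = 0 the ℓ₂ gain from i to q is at most Γ₁ = c_max/(1 − α_max). -/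
open Finset

lemma ltv_step (amax cmax a cc x y : ℝ) (ha0 : 0 < a) (ha : a ≤ amax)
    (h1 : amax < 1) (hcc : 0 ≤ cc) (hc2 : cc ≤ cmax) :
    (a * x + cc * y) ^ 2 ≤ amax * x ^ 2 + cmax ^ 2 / (1 - amax) * y ^ 2 := by
  have h1a : 0 < 1 - a := by linarith
  have h1m : 0 < 1 - amax := by linarith
  set K := cmax ^ 2 / (1 - amax) with hK
  have hK0 : 0 ≤ K := by positivity
  have hKm : K * (1 - amax) = cmax ^ 2 := div_mul_cancel₀ _ h1m.ne'
  have hKa : cc ^ 2 ≤ K * (1 - a) := by nlinarith [sq_nonneg cc, sq_nonneg cmax]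
  have mid : (1 - a) * (a * x + cc * y) ^ 2 ≤ a * (1 - a) * x ^ 2 + cc ^ 2 * y ^ 2 := by
    nlinarith [mul_nonneg ha0.le (sq_nonneg ((1 - a) * x - cc * y))]
  have mid2 : (a * x + cc * y) ^ 2 ≤ a * x ^ 2 + K * y ^ 2 := by
    rw [← mul_le_mul_iff_right₀ h1a]
    nlinarith [mul_nonneg (mul_nonneg hK0 h1a.le) (sq_nonneg y), sq_nonneg y]
  nlinarith [sq_nonneg x]

/-- For the scalar linear time-varying recursion q[n+1] = α[n]q[n] + c[n]i[n] with
0 < α[n] ≤ α_max < 1 and 0 ≤ c[n] ≤ c_max, for every N,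
Σ_{n=0}^{N} q[n]² ≤ (c_max/(1 − α_max))² Σ_{n=0}^{N} i[n]² + q[0]²/(1 − α_max);
in particular if q[0] = 0 the ℓ₂ gain from i to q is at most c_max/(1 − α_max). -/
theorem ltv_state_l2_bound (αmax cmax : ℝ) (hα0 : 0 < αmax) (hα1 : αmax < 1)
    (hc : 0 ≤ cmax) (α c : ℕ → ℝ)
    (hαn : ∀ n, 0 < α n ∧ α n ≤ αmax) (hcn : ∀ n, 0 ≤ c n ∧ c n ≤ cmax)
    (q i : ℕ → ℝ) (hrec : ∀ n, q (n + 1) = α n * q n + c n * i n) :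
    ∀ N : ℕ, ∑ n ∈ Finset.range (N + 1), q n ^ 2 ≤
      (cmax / (1 - αmax)) ^ 2 * ∑ n ∈ Finset.range (N + 1), i n ^ 2
        + q 0 ^ 2 / (1 - αmax) := by
  intro N
  have h1m : 0 < 1 - αmax := by linarith
  set K := cmax ^ 2 / (1 - αmax) with hKdef
  set S := ∑ n ∈ Finset.range (N + 1), q n ^ 2 with hS
  set T := ∑ n ∈ Finset.range (N + 1), i n ^ 2 with hT
  have hstep : ∀ n, q (n + 1) ^ 2 ≤ αmax * q n ^ 2 + K * i n ^ 2 := by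
    intro n
    rw [hrec n]
    exact ltv_step αmax cmax (α n) (c n) (q n) (i n) (hαn n).1 (hαn n).2 hα1
      (hcn n).1 (hcn n).2
  have hsum : ∑ n ∈ Finset.range (N + 1), q (n + 1) ^ 2 ≤ αmax * S + K * T := by
    rw [hS, hT, Finset.mul_sum, Finset.mul_sum, ← Finset.sum_add_distrib]
    exact Finset.sum_le_sum fun n _ => hstep n
  have hshift : S ≤ q 0 ^ 2 + ∑ n ∈ Finset.range (N + 1), q (n + 1) ^ 2 := by
    rw [hS, Finset.sum_range_succ' (fun n => q n ^ 2) N]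
    have : ∑ n ∈ Finset.range N, q (n + 1) ^ 2 ≤
        ∑ n ∈ Finset.range (N + 1), q (n + 1) ^ 2 := by
      apply Finset.sum_le_sum_of_subset_of_nonneg
      · exact Finset.range_subset_range.2 (Nat.le_succ N)
      · intro n _ _; positivity
    linarith
  have key : S * (1 - αmax) ≤ K * T + q 0 ^ 2 := by nlinarith
  have final : S ≤ (K * T + q 0 ^ 2) / (1 - αmax) := by
    rw [le_div_iff₀ h1m]; exact key
  calc S ≤ (K * T + q 0 ^ 2) / (1 - αmax) := final
    _ = (cmax / (1 - αmax)) ^ 2 * T + q 0 ^ 2 / (1 - αmax) := by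
        rw [hKdef, div_pow]; field_simp
end

section
/- Fix positive reals R, C, L, T_on, T_off^min, T_off^max with T_off^min ≤ T_off^max, and λ ∈ [0,1]. Set T_s^min = T_on + T_off^min, T_s^max = T_on + T_off^max, τ₂ = L/R. For t ∈ ℝ define α(t) = 1 − (T_on + t)/(RC) − T_on(T_on + t)/(2LC), β(t) = (1/C)((1 − λ)T_on + t/2), γ(t) = (1/C)(λT_on + t/2). Assume T_s^max (1 + T_on/(2τ₂)) < RC. Let t_off: ℕ → ℝ satisfy T_off^min ≤ t_off[n] ≤ T_off^max for all n, and let ṽ, ĩ: ℕ → ℝ satisfy ṽ[0] = 0, ĩ[0] = 0, and the recursion ṽ[n+1] = α(t_off[n]) ṽ[n] + β(t_off[n]) ĩ[n] + γ(t_off[n]) ĩ[n+1] for all n. Then for every N ∈ ℕ, (Σ_{n=0}^{N} ṽ[n]²)^{1/2} ≤ Γ_{i→v} (Σ_{n=0}^{N} ĩ[n]²)^{1/2}, where Γ_{i→v} = (R/(1 + T_on/(2τ₂))) · (T_s^max/T_s^min). -/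
open Finset

set_option maxHeartbeats 1600000 in
/-- Large-signal ℓ₂ gain bound for the voltage block of a constant on-time
current-mode buck converter: under the time-constant condition
T_s^max (1 + T_on/(2τ₂)) < RC, the recursion
ṽ[n+1] = α(t_off[n])ṽ[n] + β(t_off[n])ĩ[n] + γ(t_off[n])ĩ[n+1]
with T_off^min ≤ t_off[n] ≤ T_off^max and zero initial conditions satisfies
‖ṽ‖₂ ≤ Γ_{i→v} ‖ĩ‖₂ on every truncation, where
Γ_{i→v} = (R/(1 + T_on/(2τ₂)))·(T_s^max/T_s^min). -/
theorem voltage_block_gain (R C L Ton Toffmin Toffmax lam : ℝ)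
    (hR : 0 < R) (hC : 0 < C) (hL : 0 < L) (hTon : 0 < Ton)
    (hTmin : 0 < Toffmin) (hTmax : 0 < Toffmax) (hminmax : Toffmin ≤ Toffmax)
    (hlam0 : 0 ≤ lam) (hlam1 : lam ≤ 1)
    (htime : (Ton + Toffmax) * (1 + Ton / (2 * (L / R))) < R * C)
    (toff : ℕ → ℝ) (htoff : ∀ n, Toffmin ≤ toff n ∧ toff n ≤ Toffmax)
    (v i : ℕ → ℝ) (hv0 : v 0 = 0) (hi0 : i 0 = 0)
    (hrec : ∀ n, v (n + 1) =
      (1 - (Ton + toff n) / (R * C) - Ton * (Ton + toff n) / (2 * L * C)) * v n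
        + ((1 / C) * ((1 - lam) * Ton + toff n / 2)) * i n
        + ((1 / C) * (lam * Ton + toff n / 2)) * i (n + 1)) :
    ∀ N : ℕ, Real.sqrt (∑ n ∈ Finset.range (N + 1), v n ^ 2) ≤
      (R / (1 + Ton / (2 * (L / R)))) * ((Ton + Toffmax) / (Ton + Toffmin)) *
        Real.sqrt (∑ n ∈ Finset.range (N + 1), i n ^ 2) := by
  intro N
  have hRC : 0 < R * C := mul_pos hR hC
  have hLR : 0 < L / R := div_pos hL hR
  set μ : ℝ := 1 + Ton / (2 * (L / R)) with hμdef
  have hμ1 : 1 < μ := by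
    have : 0 < Ton / (2 * (L / R)) := div_pos hTon (by linarith)
    simp only [hμdef]; linarith
  have hμ0 : 0 < μ := by linarith
  set a : ℕ → ℝ := fun n => 1 - (Ton + toff n) * μ / (R * C) with ha_def
  set b : ℕ → ℝ := fun n => (1 / C) * ((1 - lam) * Ton + toff n / 2) with hb_def
  set c : ℕ → ℝ := fun n => (1 / C) * (lam * Ton + toff n / 2) with hc_def
  set u : ℕ → ℝ := fun n => b n * i n + c n * i (n + 1) with hu_def
  set ab : ℝ := 1 - (Ton + Toffmin) * μ / (R * C) with hab_def
  set B : ℝ := (Ton + Toffmax) / C with hB_def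
  have htoffpos : ∀ n, 0 < toff n := fun n => lt_of_lt_of_le hTmin (htoff n).1
  have hminmaxμ : (Ton + Toffmin) * μ ≤ (Ton + Toffmax) * μ :=
    mul_le_mul_of_nonneg_right (by linarith) hμ0.le
  have hab_pos : 0 < ab := by
    have : (Ton + Toffmin) * μ / (R * C) < 1 := by
      rw [div_lt_one hRC]; linarith
    simp only [hab_def]; linarith
  have h1ab : 0 < 1 - ab := by
    have : 0 < (Ton + Toffmin) * μ / (R * C) :=
      div_pos (mul_pos (by linarith) hμ0) hRC
    simp only [hab_def]; linarith
  have ha_bounds : ∀ n, 0 < a n ∧ a n ≤ ab := by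
    intro n
    have h1 : (Ton + toff n) * μ ≤ (Ton + Toffmax) * μ :=
      mul_le_mul_of_nonneg_right (by linarith [(htoff n).2]) hμ0.le
    have h2 : (Ton + Toffmin) * μ ≤ (Ton + toff n) * μ :=
      mul_le_mul_of_nonneg_right (by linarith [(htoff n).1]) hμ0.le
    constructor
    · have : (Ton + toff n) * μ / (R * C) < 1 := by
        rw [div_lt_one hRC]; linarith
      simp only [ha_def]; linarith
    · simp only [ha_def, hab_def]
      have : (Ton + Toffmin) * μ / (R * C) ≤ (Ton + toff n) * μ / (R * C) := by
        gcongr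
      linarith
  have hb_nonneg : ∀ n, 0 ≤ b n := by
    intro n
    apply mul_nonneg (by positivity)
    have := htoffpos n; nlinarith
  have hc_nonneg : ∀ n, 0 ≤ c n := by
    intro n
    apply mul_nonneg (by positivity)
    have := htoffpos n; nlinarith
  have hbcB : ∀ n, b n + c n ≤ B := by
    intro n
    have heq : b n + c n = (Ton + toff n) / C := by
      simp only [hb_def, hc_def]; field_simp; ring
    rw [heq, hB_def]
    gcongr
    linarith [(htoff n).2]
  have hbB : ∀ n, b n ≤ B := fun n => le_trans (le_add_of_nonneg_right (hc_nonneg n)) (hbcB n)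
  have hbcB' : ∀ n, b (n + 1) + c n ≤ B := by
    intro n
    have heq : b (n + 1) + c n = (Ton + (toff (n + 1) + toff n) / 2) / C := by
      simp only [hb_def, hc_def]; field_simp; ring
    rw [heq, hB_def]
    gcongr
    linarith [(htoff (n + 1)).2, (htoff n).2]
  have hB_pos : 0 < B := div_pos (by linarith) hC
  -- recursion in compact form
  have haeq : ∀ n, 1 - (Ton + toff n) / (R * C) - Ton * (Ton + toff n) / (2 * L * C) = a n := by
    intro n
    simp only [ha_def, hμdef]
    field_simp
    ring
  have hrec' : ∀ n, v (n + 1) = a n * v n + u n := by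
    intro n
    rw [hrec n, haeq n]
    simp only [hu_def, hb_def, hc_def]
    ring
  have hu_eq : ∀ n, u n = b n * i n + c n * i (n + 1) := fun n => rfl
  set Γ : ℝ := (R / μ) * ((Ton + Toffmax) / (Ton + Toffmin)) with hΓdef
  have hΓ_pos : 0 < Γ := by
    apply mul_pos (div_pos hR hμ0) (div_pos (by linarith) (by linarith))
  have hΓeq : Γ * (1 - ab) = B := by
    simp only [hΓdef, hab_def, hB_def]
    have h1 : (1 : ℝ) - (1 - (Ton + Toffmin) * μ / (R * C)) = (Ton + Toffmin) * μ / (R * C) := by ring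
    rw [h1]
    field_simp
  clear_value a b c u ab B Γ
  clear ha_def hb_def hc_def hu_def hab_def hB_def hΓdef haeq htime hminmaxμ hrec hμdef hμ1 hμ0
  -- per-step Young bound (scaled by (1 - ab))
  have hstep : ∀ n, (1 - ab) * v (n + 1) ^ 2 ≤ (1 - ab) * (ab * v n ^ 2) + u n ^ 2 := by
    intro n
    rw [hrec' n]
    obtain ⟨ha0, haab⟩ := ha_bounds n
    nlinarith [sq_nonneg (a n * (1 - ab) * v n - ab * u n),
      mul_nonneg (mul_nonneg h1ab.le (mul_nonneg (sub_nonneg.2 haab)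
        (by linarith : (0:ℝ) ≤ ab + a n))) (sq_nonneg (v n)),
      hab_pos, mul_pos hab_pos h1ab]
  -- per-step bound on u
  have hustep : ∀ n, u n ^ 2 ≤ B * (b n * i n ^ 2 + c n * i (n + 1) ^ 2) := by
    intro n
    rw [hu_eq n]
    have h1 : b n * i n ^ 2 + c n * i (n + 1) ^ 2 ≥ 0 := by
      have := hb_nonneg n; have := hc_nonneg n; positivity
    nlinarith [mul_nonneg (mul_nonneg (hb_nonneg n) (hc_nonneg n)) (sq_nonneg (i n - i (n + 1))),
      mul_nonneg (sub_nonneg.2 (hbcB n)) h1]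
  set Sv : ℝ := ∑ n ∈ Finset.range (N + 1), v n ^ 2 with hSv
  set Si : ℝ := ∑ n ∈ Finset.range (N + 1), i n ^ 2 with hSi
  have hSv_nonneg : 0 ≤ Sv := Finset.sum_nonneg fun n _ => sq_nonneg _
  have hSi_nonneg : 0 ≤ Si := Finset.sum_nonneg fun n _ => sq_nonneg _
  clear_value Sv Si
  -- main summed inequality
  have hmain : (1 - ab) * (1 - ab) * Sv ≤ ∑ n ∈ Finset.range N, u n ^ 2 := by
    have h1 : Sv = ∑ n ∈ Finset.range N, v (n + 1) ^ 2 := by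
      rw [hSv, Finset.sum_range_succ']
      simp [hv0]
    have h2 : (1 - ab) * Sv ≤ (1 - ab) * ab * Sv + ∑ n ∈ Finset.range N, u n ^ 2 := by
      calc (1 - ab) * Sv = ∑ n ∈ Finset.range N, (1 - ab) * v (n + 1) ^ 2 := by
            rw [h1, Finset.mul_sum]
        _ ≤ ∑ n ∈ Finset.range N, ((1 - ab) * ab * v n ^ 2 + u n ^ 2) := by
            apply Finset.sum_le_sum
            intro n _
            have := hstep n
            nlinarith [hstep n]
        _ = (1 - ab) * ab * (∑ n ∈ Finset.range N, v n ^ 2)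
              + ∑ n ∈ Finset.range N, u n ^ 2 := by
            rw [Finset.sum_add_distrib, Finset.mul_sum]
        _ ≤ (1 - ab) * ab * Sv + ∑ n ∈ Finset.range N, u n ^ 2 := by
            have hle : (∑ n ∈ Finset.range N, v n ^ 2) ≤ Sv := by
              rw [hSv, Finset.sum_range_succ]
              exact le_add_of_nonneg_right (sq_nonneg _)
            have hnn : 0 ≤ (1 - ab) * ab := mul_nonneg h1ab.le hab_pos.le
            nlinarith [mul_le_mul_of_nonneg_left hle hnn]
    nlinarith [h2, hSv_nonneg, hab_pos, h1ab]
  -- bound the u-sum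
  have huB : ∑ n ∈ Finset.range N, u n ^ 2 ≤ B * B * Si := by
    have hG : ∑ n ∈ Finset.range N, c n * i (n + 1) ^ 2
        = ∑ m ∈ Finset.range (N + 1), (if m = 0 then 0 else c (m - 1) * i m ^ 2) := by
      rw [Finset.sum_range_succ']
      simp
    calc ∑ n ∈ Finset.range N, u n ^ 2
        ≤ ∑ n ∈ Finset.range N, B * (b n * i n ^ 2 + c n * i (n + 1) ^ 2) :=
          Finset.sum_le_sum fun n _ => hustep n
      _ = B * (∑ n ∈ Finset.range N, b n * i n ^ 2 + ∑ n ∈ Finset.range N, c n * i (n + 1) ^ 2) := by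
          rw [← Finset.sum_add_distrib, Finset.mul_sum]
      _ ≤ B * (∑ n ∈ Finset.range (N + 1), b n * i n ^ 2
            + ∑ m ∈ Finset.range (N + 1), (if m = 0 then 0 else c (m - 1) * i m ^ 2)) := by
          rw [← hG]
          apply mul_le_mul_of_nonneg_left _ hB_pos.le
          have h5 : ∑ n ∈ Finset.range N, b n * i n ^ 2
              ≤ ∑ n ∈ Finset.range (N + 1), b n * i n ^ 2 := by
            rw [Finset.sum_range_succ]
            exact le_add_of_nonneg_right (mul_nonneg (hb_nonneg N) (sq_nonneg _))
          linarith
      _ = B * ∑ m ∈ Finset.range (N + 1),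
            (b m * i m ^ 2 + if m = 0 then 0 else c (m - 1) * i m ^ 2) := by
          rw [← Finset.sum_add_distrib]
      _ ≤ B * ∑ m ∈ Finset.range (N + 1), B * i m ^ 2 := by
          apply mul_le_mul_of_nonneg_left _ hB_pos.le
          apply Finset.sum_le_sum
          intro m hm
          rcases Nat.eq_zero_or_pos m with h0 | hpos
          · subst h0
            rw [if_pos rfl, add_zero]
            exact mul_le_mul_of_nonneg_right (hbB 0) (sq_nonneg _)
          · obtain ⟨k, rfl⟩ := Nat.exists_eq_add_of_lt hpos
            simp only [Nat.zero_add]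
            rw [if_neg (Nat.succ_ne_zero k)]
            simp only [Nat.add_sub_cancel]
            have : b (k + 1) * i (k + 1) ^ 2 + c k * i (k + 1) ^ 2
                = (b (k + 1) + c k) * i (k + 1) ^ 2 := by ring
            rw [this]
            exact mul_le_mul_of_nonneg_right (hbcB' k) (sq_nonneg _)
      _ = B * B * Si := by
          rw [← Finset.mul_sum, hSi]; ring
  -- combine
  have hfinal : Sv ≤ Γ ^ 2 * Si := by
    have h1 : (1 - ab) * (1 - ab) * Sv ≤ B * B * Si := le_trans hmain huB
    have h2 : B * B = Γ ^ 2 * ((1 - ab) * (1 - ab)) := by rw [← hΓeq]; ring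
    rw [h2] at h1
    have h3 : (1 - ab) * (1 - ab) * Sv = ((1 - ab) * (1 - ab)) * Sv := by ring
    have h4 : Γ ^ 2 * ((1 - ab) * (1 - ab)) * Si = ((1 - ab) * (1 - ab)) * (Γ ^ 2 * Si) := by ring
    rw [h3, h4] at h1
    exact le_of_mul_le_mul_left h1 (mul_pos h1ab h1ab)
  calc Real.sqrt Sv ≤ Real.sqrt (Γ ^ 2 * Si) := Real.sqrt_le_sqrt hfinal
    _ = Γ * Real.sqrt Si := by
        rw [Real.sqrt_mul (sq_nonneg Γ), Real.sqrt_sq hΓ_pos.le]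
end
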